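/- arXiv:1312.4475 — 3 statements merged into one kernel-verified Lean document; each statement's English description precedes it below -/
import Mathlib

section
/- Let O be a discrete valuation ring with uniformizer π, G a finite group, and M, N finitely generated OG-lattices. Suppose every element of the stable Hom space Hom(M,N) (morphisms modulo those factoring through a projective OG-module) is annihilated by π^b. Then the reduction map Hom_stable(M, N) → Hom_stable(M/π^b M, N/π^b N) induced by tensoring with O/π^b O is injective. -/
open Pointwise

/-- `f` factors through a projective `A`-module. -/
def FactorsThroughProjective (A : Type) [Ring A] {M N : Type}
    [AddCommGroup M] [Module A M] [AddCommGroup N] [Module A N]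
    (f : M →ₗ[A] N) : Prop :=
  ∃ (P : Type) (_ : AddCommGroup P) (_ : Module A P), Module.Projective A P ∧
    ∃ (g : M →ₗ[A] P) (h : P →ₗ[A] N), h.comp g = f

/-- Let `O` be a discrete valuation ring with uniformizer `π`, `G` a
finite group and `M`, `N` finitely generated `OG`-lattices.  If every stable
homomorphism `M → N` is annihilated by `π^b` (i.e. `π^b • f` factors through a
projective for every `f`), then the reduction map on stable Hom spaces induced by
`- ⊗ O/π^b O` is injective: a map `f : M → N` whose reduction mod `π^b` factors
through a projective already factors through a projective. -/
theorem stable_hom_reduction_injective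
    (O : Type) [CommRing O] [IsDomain O] [IsDiscreteValuationRing O]
    (π : O) (hπ : Irreducible π)
    (G : Type) [Group G] [Fintype G]
    (M N : Type) [AddCommGroup M] [Module (MonoidAlgebra O G) M]
    [AddCommGroup N] [Module (MonoidAlgebra O G) N]
    [Module O M] [IsScalarTower O (MonoidAlgebra O G) M] [SMulCommClass O (MonoidAlgebra O G) M]
    [Module O N] [IsScalarTower O (MonoidAlgebra O G) N] [SMulCommClass O (MonoidAlgebra O G) N]
    (hMfg : Module.Finite (MonoidAlgebra O G) M) (hMfree : Module.Free O M)
    (hNfg : Module.Finite (MonoidAlgebra O G) N) (hNfree : Module.Free O N)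
    (b : ℕ)
    (hann : ∀ f : M →ₗ[MonoidAlgebra O G] N,
      FactorsThroughProjective (MonoidAlgebra O G) (π ^ b • f)) :
    ∀ (f : M →ₗ[MonoidAlgebra O G] N)
      (hle : (π ^ b • ⊤ : Submodule (MonoidAlgebra O G) M) ≤
        (π ^ b • ⊤ : Submodule (MonoidAlgebra O G) N).comap f),
      FactorsThroughProjective (MonoidAlgebra O G)
        (Submodule.mapQ (π ^ b • ⊤ : Submodule (MonoidAlgebra O G) M)
          (π ^ b • ⊤ : Submodule (MonoidAlgebra O G) N) f hle) →
      FactorsThroughProjective (MonoidAlgebra O G) f := by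

  intro f hle hfq
  set A := MonoidAlgebra O G
  obtain ⟨P, _, _, hP, g, h, hgh⟩ := hfq
  haveI := hP
  obtain ⟨h', hh'⟩ := Module.projective_lifting_property
    ((π ^ b • ⊤ : Submodule A N).mkQ) h (Submodule.mkQ_surjective _)
  set c : M →ₗ[A] N := h' ∘ₗ g ∘ₗ (π ^ b • ⊤ : Submodule A M).mkQ with hc
  have hmem : ∀ x : M, f x - c x ∈ (π ^ b • ⊤ : Submodule A N) := by
    intro x
    rw [← Submodule.Quotient.eq]
    have h1 := congrArg (fun φ => φ (Submodule.Quotient.mk x :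
      M ⧸ (π ^ b • ⊤ : Submodule A M))) hgh
    have h2 := congrArg (fun φ => φ (g (Submodule.Quotient.mk x :
      M ⧸ (π ^ b • ⊤ : Submodule A M)))) hh'
    simp only [LinearMap.comp_apply, Submodule.mapQ_apply, Submodule.mkQ_apply] at h1 h2
    rw [← h1, ← h2]
    rfl
  haveI := hNfree
  have hinj : Function.Injective (fun n : N => (π ^ b : O) • n) :=
    smul_right_injective N (pow_ne_zero b hπ.ne_zero)
  have hex : ∀ x : M, ∃ y : N, (π ^ b : O) • y = f x - c x := by
    intro x
    obtain ⟨y, -, hy⟩ := Set.mem_smul_set.mp (hmem x)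
    exact ⟨y, hy⟩
  choose u hu using hex
  set U : M →ₗ[A] N :=
    { toFun := u
      map_add' := fun x y => hinj (by
        simp only [hu, smul_add, map_add]
        abel)
      map_smul' := fun a x => hinj (by
        simp only [RingHom.id_apply, hu, map_smul, smul_comm (π ^ b : O) a, smul_sub]) }
    with hU
  obtain ⟨Q, _, _, hQ, g₂, h₂, hg₂⟩ := hann U
  haveI := hQ
  refine ⟨P × Q, inferInstance, inferInstance, inferInstance,
    LinearMap.prod (g ∘ₗ (π ^ b • ⊤ : Submodule A M).mkQ) g₂,
    LinearMap.coprod h' h₂, ?_⟩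
  ext x
  have h3 : h₂ (g₂ x) = (π ^ b : O) • u x := by
    have := congrArg (fun φ => φ x) hg₂
    simpa [hU] using this
  simp only [LinearMap.comp_apply, LinearMap.coprod_apply, LinearMap.prod_apply,
    Function.prod, h3, hu]
  show c x + (f x - c x) = f x
  abel
end

section
/- Let O be a complete discrete valuation ring, G a finite group, and M an OG-lattice that is projective relative to a subgroup H ≤ G (i.e., the identity of M is in the image of the relative trace map Tr_{H,G} : End_{OH}(M) → End_{OG}(M)). If π^n · Id_M factors through a projective OH-module as an OH-map, then π^n · Id_M factors through a projective OG-module as an OG-map. Consequently exp(M) = exp(M↓_H). -/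
open Finset

theorem aux_extend {O : Type} [CommRing O] {Γ : Type} [Monoid Γ]
    {A B : Type} [AddCommMonoid A] [AddCommMonoid B]
    [Module (MonoidAlgebra O Γ) A] [Module (MonoidAlgebra O Γ) B]
    [Module O A] [Module O B]
    [IsScalarTower O (MonoidAlgebra O Γ) A] [IsScalarTower O (MonoidAlgebra O Γ) B]
    (f : A → B)
    (hadd : ∀ x y, f (x + y) = f x + f y)
    (hO : ∀ (c : O) (x : A), f (c • x) = c • f x)
    (hG : ∀ (g : Γ) (x : A), f (MonoidAlgebra.of O Γ g • x) = MonoidAlgebra.of O Γ g • f x) :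
    ∀ (r : MonoidAlgebra O Γ) (x : A), f (r • x) = r • f x := by
  intro r
  induction r using MonoidAlgebra.induction_linear with
  | zero => intro x; have := hO 0 x; simpa using this
  | add p q hp hq => intro x; rw [add_smul, hadd, hp, hq, add_smul]
  | single g c =>
      intro x
      have h1 : (MonoidAlgebra.single g c : MonoidAlgebra O Γ)
          = c • (MonoidAlgebra.of O Γ g) := by
        simp [MonoidAlgebra.of_apply, MonoidAlgebra.smul_single']
      show f ((MonoidAlgebra.single g c : MonoidAlgebra O Γ) • x)
          = (MonoidAlgebra.single g c : MonoidAlgebra O Γ) • f x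
      rw [h1, smul_assoc, hO, hG, ← smul_assoc]

theorem aux_semilinear {O : Type} [CommRing O] {Γ Δ : Type} [Monoid Γ] [Monoid Δ]
    (ψ : Γ →* Δ)
    {A B : Type} [AddCommMonoid A] [AddCommMonoid B]
    [Module (MonoidAlgebra O Γ) A] [Module (MonoidAlgebra O Δ) B]
    [Module O A] [Module O B]
    [IsScalarTower O (MonoidAlgebra O Γ) A] [IsScalarTower O (MonoidAlgebra O Δ) B]
    (f : A → B)
    (hadd : ∀ x y, f (x + y) = f x + f y)
    (hO : ∀ (c : O) (x : A), f (c • x) = c • f x)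
    (hG : ∀ (g : Γ) (x : A),
      f (MonoidAlgebra.of O Γ g • x) = MonoidAlgebra.of O Δ (ψ g) • f x) :
    ∀ (r : MonoidAlgebra O Γ) (x : A),
      f (r • x) = (MonoidAlgebra.mapDomainRingHom O ψ r) • f x := by
  intro r
  induction r using MonoidAlgebra.induction_linear with
  | zero => intro x; have := hO 0 x; simpa using this
  | add p q hp hq => intro x; rw [add_smul, hadd, hp, hq, map_add, add_smul]
  | single g c =>
      intro x
      have h1 : (MonoidAlgebra.single g c : MonoidAlgebra O Γ)
          = c • (MonoidAlgebra.of O Γ g) := by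
        simp [MonoidAlgebra.of_apply, MonoidAlgebra.smul_single']
      have h2 : (MonoidAlgebra.mapDomainRingHom O ψ) (MonoidAlgebra.single g c)
          = c • (MonoidAlgebra.of O Δ (ψ g)) := by
        simp [MonoidAlgebra.mapDomainRingHom, MonoidAlgebra.of_apply,
          MonoidAlgebra.smul_single', Finsupp.mapDomain_single]
      show f ((MonoidAlgebra.single g c : MonoidAlgebra O Γ) • x)
          = (MonoidAlgebra.mapDomainRingHom O ψ) (MonoidAlgebra.single g c) • f x
      rw [h2, h1, smul_assoc, hO, hG, ← smul_assoc]

set_option maxHeartbeats 1000000 in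
/-- Let `O` be a complete discrete valuation ring with uniformizer
`π`, `G` a finite group, `H ≤ G`, and `M` an `OG`-lattice which is projective
relative to `H`: the identity of `M` is the relative trace `Tr_{H,G}(a)` of some
`OH`-endomorphism `a` (the sum being over a transversal `T` of the left cosets
of `H` in `G`).  Then for every `n`, `π^n • Id_M` factors through a projective
`OH`-module as an `OH`-map if and only if it factors through a projective
`OG`-module as an `OG`-map.  (In particular `exp(M) = exp(M↓_H)`.) -/
theorem relative_projectivity_exponent
    (O : Type) [CommRing O] [IsDomain O] [IsDiscreteValuationRing O]
    (π : O) (hπ : Irreducible π)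
    [IsAdicComplete (Ideal.span {π}) O]
    (G : Type) [Group G] [Fintype G] (H : Subgroup G)
    (M : Type) [AddCommGroup M] [Module (MonoidAlgebra O G) M]
    [Module O M] [IsScalarTower O (MonoidAlgebra O G) M]
    (hMfg : Module.Finite (MonoidAlgebra O G) M) (hMfree : Module.Free O M)
    -- a transversal of the left cosets of `H` in `G`
    (T : Finset G) (hT : ∀ g : G, ∃! t : G, t ∈ T ∧ g⁻¹ * t ∈ H)
    -- an `OH`-linear endomorphism `a` of `M` ...
    (a : M → M)
    (haAdd : ∀ m m' : M, a (m + m') = a m + a m')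
    (haO : ∀ (c : O) (m : M), a (c • m) = c • a m)
    (haH : ∀ h ∈ H, ∀ m : M,
      a (MonoidAlgebra.of O G h • m) = MonoidAlgebra.of O G h • a m)
    -- ... whose relative trace is the identity of `M`
    (htr : ∀ m : M,
      ∑ t ∈ T, MonoidAlgebra.of O G t • a (MonoidAlgebra.of O G t⁻¹ • m) = m) :
    ∀ n : ℕ,
      (∃ (P : Type) (_ : AddCommGroup P) (_ : Module (MonoidAlgebra O ↥H) P)
        (_ : Module O P) (_ : IsScalarTower O (MonoidAlgebra O ↥H) P),
        Module.Projective (MonoidAlgebra O ↥H) P ∧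
        ∃ (u : M → P) (v : P → M),
          (∀ m m' : M, u (m + m') = u m + u m') ∧
          (∀ (c : O) (m : M), u (c • m) = c • u m) ∧
          (∀ (s : ↥H) (m : M),
            u (MonoidAlgebra.of O G (s : G) • m) = MonoidAlgebra.of O ↥H s • u m) ∧
          (∀ x y : P, v (x + y) = v x + v y) ∧
          (∀ (c : O) (x : P), v (c • x) = c • v x) ∧
          (∀ (s : ↥H) (x : P),
            v (MonoidAlgebra.of O ↥H s • x) = MonoidAlgebra.of O G (s : G) • v x) ∧
          (∀ m : M, v (u m) = π ^ n • m))
      ↔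
      (∃ (Q : Type) (_ : AddCommGroup Q) (_ : Module (MonoidAlgebra O G) Q),
        Module.Projective (MonoidAlgebra O G) Q ∧
        ∃ (u : M →ₗ[MonoidAlgebra O G] Q) (v : Q →ₗ[MonoidAlgebra O G] M),
          ∀ m : M, v (u m) = π ^ n • m) := by
  classical
  -- the transversal "pick" function
  choose pick hpT hpH using fun g => (hT g).exists
  have huniq : ∀ g t, t ∈ T → g⁻¹ * t ∈ H → t = pick g := fun g t h1 h2 =>
    (hT g).unique ⟨h1, h2⟩ ⟨hpT g, hpH g⟩
  have hscM : SMulCommClass O (MonoidAlgebra O G) M := by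
    constructor
    intro c r m
    rw [← algebraMap_smul (MonoidAlgebra O G) c (r • m),
      ← algebraMap_smul (MonoidAlgebra O G) c m, ← mul_smul, ← mul_smul,
      Algebra.commutes]
  have hφof : ∀ h : ↥H,
      (MonoidAlgebra.mapDomainRingHom O H.subtype) (MonoidAlgebra.of O ↥H h)
        = MonoidAlgebra.of O G (h : G) := by
    intro h
    simp [MonoidAlgebra.mapDomainRingHom, MonoidAlgebra.of_apply,
      Finsupp.mapDomain_single]
  have hφO : ∀ (c : O) (z : MonoidAlgebra O ↥H),
      (MonoidAlgebra.mapDomainRingHom O H.subtype) (c • z)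
        = c • (MonoidAlgebra.mapDomainRingHom O H.subtype) z := by
    intro c z
    exact MonoidAlgebra.mapDomain_smul _ c z
  intro n
  constructor
  · rintro ⟨P, _, _, _, _, hProj, u, v, huAdd, huO, huH, hvAdd, hvO, hvH, huv⟩
    obtain ⟨s, hs⟩ := Module.projective_def.mp hProj
    have hv0 : v 0 = 0 := by have := hvO 0 0; simpa using this
    have hsO : ∀ (c : O) (p : P), s (c • p) = c • s p := by
      intro c p
      rw [← algebraMap_smul (MonoidAlgebra O ↥H) c p, map_smul, algebraMap_smul]
    have hvS : ∀ (r : MonoidAlgebra O ↥H) (x : P),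
        v (r • x) = (MonoidAlgebra.mapDomainRingHom O H.subtype r) • v x :=
      aux_semilinear H.subtype v hvAdd hvO (fun h x => hvH h x)
    -- the map induced by inclusion on coefficients
    set j : (P →₀ MonoidAlgebra O ↥H) → (P →₀ MonoidAlgebra O G) :=
      Finsupp.mapRange (⇑(MonoidAlgebra.mapDomainRingHom O H.subtype)) (map_zero _)
      with hjdef
    have jAdd : ∀ x y, j (x + y) = j x + j y := fun x y =>
      Finsupp.mapRange_add (map_add _) x y
    have jO : ∀ (c : O) x, j (c • x) = c • j x := by
      intro c x
      ext p
      simp [hjdef, Finsupp.mapRange_apply, Finsupp.smul_apply, hφO]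
    have jH : ∀ (h : ↥H) x,
        j (MonoidAlgebra.of O ↥H h • x) = MonoidAlgebra.of O G (h : G) • j x := by
      intro h x
      ext p
      simp only [hjdef, Finsupp.mapRange_apply, Finsupp.smul_apply, smul_eq_mul,
        map_mul, hφof]
    -- w = j ∘ s ∘ u
    set w : M → (P →₀ MonoidAlgebra O G) := fun m => j (s (u m)) with hwdef
    have hwAdd : ∀ m m', w (m + m') = w m + w m' := by
      intro m m'; rw [hwdef]; simp only [huAdd, map_add, jAdd]
    have hwO : ∀ (c : O) m, w (c • m) = c • w m := by
      intro c m; rw [hwdef]; simp only [huO, hsO, jO]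
    have hwH : ∀ (h : ↥H) m,
        w (MonoidAlgebra.of O G (h : G) • m) = MonoidAlgebra.of O G (h : G) • w m := by
      intro h m; rw [hwdef]; simp only [huH h, map_smul, jH]
    -- the trace map U
    set Ufun : M → (P →₀ MonoidAlgebra O G) := fun m =>
      ∑ t ∈ T, MonoidAlgebra.of O G t • w (a (MonoidAlgebra.of O G t⁻¹ • m))
      with hUdef
    have hUadd : ∀ m m', Ufun (m + m') = Ufun m + Ufun m' := by
      intro m m'
      rw [hUdef]
      simp only [smul_add, haAdd, hwAdd, ← Finset.sum_add_distrib]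
    have hUO : ∀ (c : O) m, Ufun (c • m) = c • Ufun m := by
      intro c m
      rw [hUdef, Finset.smul_sum]
      refine Finset.sum_congr rfl fun t _ => ?_
      rw [smul_comm, haO, hwO, smul_comm]
    have hUG : ∀ (g : G) m,
        Ufun (MonoidAlgebra.of O G g • m) = MonoidAlgebra.of O G g • Ufun m := by
      intro g m
      rw [hUdef, Finset.smul_sum]
      have key : ∀ t ∈ T,
          MonoidAlgebra.of O G g • MonoidAlgebra.of O G t •
              w (a (MonoidAlgebra.of O G t⁻¹ • m))
            = MonoidAlgebra.of O G (pick (g * t)) •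
              w (a (MonoidAlgebra.of O G (pick (g * t))⁻¹ •
                (MonoidAlgebra.of O G g • m))) := by
        intro t ht
        set t' := pick (g * t) with ht'
        have hh : (g * t)⁻¹ * t' ∈ H := hpH (g * t)
        have hh' : t'⁻¹ * (g * t) ∈ H := by
          have := H.inv_mem hh
          simpa [mul_assoc] using this
        have hdecomp : g * t = t' * (t'⁻¹ * (g * t)) := by group
        calc MonoidAlgebra.of O G g • MonoidAlgebra.of O G t •
                w (a (MonoidAlgebra.of O G t⁻¹ • m))
            = MonoidAlgebra.of O G (g * t) • w (a (MonoidAlgebra.of O G t⁻¹ • m)) := by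
              rw [smul_smul, ← map_mul]
          _ = MonoidAlgebra.of O G t' • MonoidAlgebra.of O G (t'⁻¹ * (g * t)) •
                w (a (MonoidAlgebra.of O G t⁻¹ • m)) := by
              rw [smul_smul, ← map_mul, ← hdecomp]
          _ = MonoidAlgebra.of O G t' •
                w (MonoidAlgebra.of O G (t'⁻¹ * (g * t)) • a (MonoidAlgebra.of O G t⁻¹ • m)) := by
              rw [hwH ⟨t'⁻¹ * (g * t), hh'⟩]
          _ = MonoidAlgebra.of O G t' •
                w (a (MonoidAlgebra.of O G (t'⁻¹ * (g * t)) • MonoidAlgebra.of O G t⁻¹ • m)) := by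
              rw [haH _ hh']
          _ = MonoidAlgebra.of O G t' •
                w (a (MonoidAlgebra.of O G t'⁻¹ • MonoidAlgebra.of O G g • m)) := by
              rw [smul_smul, ← map_mul, smul_smul, ← map_mul]
              congr 3
              group
      rw [Finset.sum_congr rfl key]
      refine (Finset.sum_nbij' (fun t => pick (g * t)) (fun t => pick (g⁻¹ * t))
        (fun t _ => hpT _) (fun t _ => hpT _) ?_ ?_ (fun t _ => rfl)).symm
      · intro t ht
        refine (huniq _ t ht ?_).symm
        have := H.inv_mem (hpH (g * t))
        simpa [mul_inv_rev, mul_assoc] using this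
      · intro t ht
        refine (huniq _ t ht ?_).symm
        have := H.inv_mem (hpH (g⁻¹ * t))
        simpa [mul_inv_rev, mul_assoc] using this
    let U : M →ₗ[MonoidAlgebra O G] (P →₀ MonoidAlgebra O G) :=
      { toFun := Ufun
        map_add' := hUadd
        map_smul' := fun r m => aux_extend Ufun hUadd hUO hUG r m }
    let V : (P →₀ MonoidAlgebra O G) →ₗ[MonoidAlgebra O G] M :=
      Finsupp.linearCombination (MonoidAlgebra O G) v
    have hVj : ∀ x : P →₀ MonoidAlgebra O ↥H,
        V (j x) = v (Finsupp.linearCombination (MonoidAlgebra O ↥H) id x) := by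
      intro x
      induction x using Finsupp.induction_linear with
      | zero => simp [hjdef, hv0]
      | add p q hp hq => rw [jAdd, map_add, hp, hq, map_add, hvAdd]
      | single p cS =>
          rw [hjdef]
          simp only [Finsupp.mapRange_single, Finsupp.linearCombination_single, id_eq]
          rw [hvS]
          simp [V, Finsupp.linearCombination_single]
    refine ⟨P →₀ MonoidAlgebra O G, inferInstance, inferInstance,
      Module.Projective.of_basis Finsupp.basisSingleOne, U, V, fun m => ?_⟩
    have : V (U m) = ∑ t ∈ T, MonoidAlgebra.of O G t •
        (π ^ n • a (MonoidAlgebra.of O G t⁻¹ • m)) := by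
      show V (Ufun m) = _
      rw [hUdef]
      rw [map_sum]
      refine Finset.sum_congr rfl fun t _ => ?_
      rw [map_smul, hwdef]
      show MonoidAlgebra.of O G t • V (j (s (u (a (MonoidAlgebra.of O G t⁻¹ • m))))) = _
      rw [hVj, hs, huv]
    rw [this]
    have h2 : ∀ t ∈ T, MonoidAlgebra.of O G t •
        (π ^ n • a (MonoidAlgebra.of O G t⁻¹ • m))
        = π ^ n • (MonoidAlgebra.of O G t • a (MonoidAlgebra.of O G t⁻¹ • m)) := by
      intro t _
      rw [smul_comm]
    rw [Finset.sum_congr rfl h2, ← Finset.smul_sum, htr]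
  · rintro ⟨Q, _, _, hProj, u, v, huv⟩
    obtain ⟨s, hs⟩ := Module.projective_def.mp hProj
    letI : Module (MonoidAlgebra O ↥H) (MonoidAlgebra O G) :=
      Module.compHom _ (MonoidAlgebra.mapDomainRingHom O H.subtype)
    have hRsmul : ∀ (r : MonoidAlgebra O ↥H) (x : MonoidAlgebra O G),
        r • x = (MonoidAlgebra.mapDomainRingHom O H.subtype r) * x := fun _ _ => rfl
    haveI htowR : IsScalarTower O (MonoidAlgebra O ↥H) (MonoidAlgebra O G) := by
      constructor
      intro c r x
      rw [hRsmul, hRsmul, hφO, smul_mul_assoc]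
    -- the coset decomposition of `G`
    let σ : G ≃ (↥T × ↥H) :=
      { toFun := fun g => (⟨pick g⁻¹, hpT g⁻¹⟩, ⟨g * pick g⁻¹, by simpa using hpH g⁻¹⟩)
        invFun := fun th => (th.2 : G) * (th.1 : G)⁻¹
        left_inv := fun g => by simp [mul_assoc]
        right_inv := fun th => by
          rcases th with ⟨t, h⟩
          have h1 : (t : G) = pick (((h : G) * (t : G)⁻¹)⁻¹) := by
            apply huniq _ _ t.2
            simpa [mul_assoc] using h.2
          refine Prod.ext (Subtype.ext h1.symm) (Subtype.ext ?_)
          show (h : G) * (t : G)⁻¹ * pick (((h : G) * (t : G)⁻¹)⁻¹) = (h : G)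
          rw [← h1]
          simp [mul_assoc] }
    let e : MonoidAlgebra O G ≃ₗ[O] (↥T →₀ MonoidAlgebra O ↥H) :=
      (MonoidAlgebra.coeffLinearEquiv O).trans
      (((Finsupp.domLCongr σ : (G →₀ O) ≃ₗ[O] (↥T × ↥H →₀ O)).trans
        (Finsupp.finsuppProdLEquiv O)).trans
        (Finsupp.mapRange.linearEquiv (MonoidAlgebra.coeffLinearEquiv O).symm))
    have hprod : ∀ (p : ↥T × ↥H) (c : O),
        Finsupp.finsuppProdLEquiv O (Finsupp.single p c)
          = Finsupp.single p.1 (Finsupp.single p.2 c) := by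
      intro p c
      ext t h
      change Finsupp.single p c (t, h) = _
      rcases p with ⟨pt, ph⟩
      by_cases h1 : pt = t
      · subst h1
        by_cases h2 : ph = h
        · subst h2; simp
        · simp [Finsupp.single_apply, h2, Prod.ext_iff]
      · simp [Finsupp.single_apply, h1, Prod.ext_iff]
    have hesingle : ∀ (g : G) (c : O),
        e (MonoidAlgebra.single g c)
          = Finsupp.single (⟨pick g⁻¹, hpT g⁻¹⟩ : ↥T)
              (MonoidAlgebra.single (⟨g * pick g⁻¹, by simpa using hpH g⁻¹⟩ : ↥H) c) := by
      intro g c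
      show Finsupp.mapRange.linearEquiv (MonoidAlgebra.coeffLinearEquiv O).symm
        ((Finsupp.finsuppProdLEquiv O) ((Finsupp.domLCongr σ) (Finsupp.single g c))) = _
      rw [Finsupp.domLCongr_single, hprod]
      exact Finsupp.mapRange_single (hf := map_zero _)
    have hesmulH : ∀ (h : ↥H) (x : MonoidAlgebra O G),
        e (MonoidAlgebra.of O G (h : G) * x) = MonoidAlgebra.of O ↥H h • e x := by
      intro h x
      induction x using MonoidAlgebra.induction_linear with
      | zero => simp
      | add p q hp hq => rw [mul_add, map_add, hp, hq, map_add, smul_add]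
      | single g c =>
          have hmul : (MonoidAlgebra.of O G (h : G)) * MonoidAlgebra.single g c
              = MonoidAlgebra.single ((h : G) * g) c := by
            simp [MonoidAlgebra.of_apply, MonoidAlgebra.single_mul_single]
          rw [hmul, hesingle, hesingle]
          have hpickeq : pick (((h : G) * g)⁻¹) = pick g⁻¹ := by
            refine (huniq (((h : G) * g)⁻¹) (pick g⁻¹) (hpT g⁻¹) ?_).symm
            have h2 : g * pick g⁻¹ ∈ H := by simpa using hpH g⁻¹
            have := H.mul_mem h.2 h2
            simpa [mul_assoc] using this
          rw [Finsupp.smul_single]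
          congr 1
          · exact Subtype.ext hpickeq
          · have : (MonoidAlgebra.of O ↥H h) •
                (MonoidAlgebra.single (⟨g * pick g⁻¹, by simpa using hpH g⁻¹⟩ : ↥H) c)
                = MonoidAlgebra.single
                    (h * (⟨g * pick g⁻¹, by simpa using hpH g⁻¹⟩ : ↥H)) c := by
              rw [smul_eq_mul]
              simp [MonoidAlgebra.of_apply, MonoidAlgebra.single_mul_single]
            rw [this]
            congr 1
            · ext
              show (↑h * g) * pick ((↑h * g)⁻¹) = ↑h * (g * pick g⁻¹)
              rw [hpickeq, mul_assoc]
    have hfull : ∀ (r : MonoidAlgebra O ↥H) (x : MonoidAlgebra O G),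
        e (r • x) = r • e x := by
      refine aux_extend (⇑e) (map_add e) (fun c x => map_smul e c x) ?_
      intro h x
      rw [hRsmul, hφof]
      exact hesmulH h x
    let eS : MonoidAlgebra O G ≃ₗ[MonoidAlgebra O ↥H] (↥T →₀ MonoidAlgebra O ↥H) :=
      { toFun := e
        invFun := e.symm
        left_inv := e.left_inv
        right_inv := e.right_inv
        map_add' := map_add e
        map_smul' := hfull }
    let bR : Module.Basis ↥T (MonoidAlgebra O ↥H) (MonoidAlgebra O G) := Module.Basis.ofRepr eS
    let bF : Module.Basis (Σ _ : Q, ↥T) (MonoidAlgebra O ↥H) (Q →₀ MonoidAlgebra O G) :=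
      Finsupp.basis fun _ => bR
    haveI htow : IsScalarTower O (MonoidAlgebra O ↥H) (Q →₀ MonoidAlgebra O G) := by
      constructor
      intro c r x
      ext q
      simp only [Finsupp.smul_apply]
      rw [hRsmul, hRsmul, hφO, smul_mul_assoc]
    have hbr : ∀ (r : MonoidAlgebra O ↥H) (y : Q →₀ MonoidAlgebra O G),
        r • y = (MonoidAlgebra.mapDomainRingHom O H.subtype r) • y := by
      intro r y
      ext q
      simp only [Finsupp.smul_apply]
      rw [hRsmul, smul_eq_mul]
    refine ⟨Q →₀ MonoidAlgebra O G, inferInstance, inferInstance, inferInstance, htow,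
      Module.Projective.of_basis bF,
      fun m => s (u m),
      fun x => v (Finsupp.linearCombination (MonoidAlgebra O G) id x),
      ?_, ?_, ?_, ?_, ?_, ?_, ?_⟩
    · intro m m'
      show s (u (m + m')) = s (u m) + s (u m')
      rw [map_add, map_add]
    · intro c m
      show s (u (c • m)) = c • s (u m)
      rw [← algebraMap_smul (MonoidAlgebra O G) c m, map_smul, map_smul, algebraMap_smul]
    · intro h m
      show s (u (MonoidAlgebra.of O G (h : G) • m)) = MonoidAlgebra.of O ↥H h • s (u m)
      rw [map_smul, map_smul, hbr, hφof]
    · intro x y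
      show v (Finsupp.linearCombination (MonoidAlgebra O G) id (x + y))
        = v (Finsupp.linearCombination (MonoidAlgebra O G) id x)
          + v (Finsupp.linearCombination (MonoidAlgebra O G) id y)
      rw [map_add, map_add]
    · intro c x
      show v (Finsupp.linearCombination (MonoidAlgebra O G) id (c • x))
        = c • v (Finsupp.linearCombination (MonoidAlgebra O G) id x)
      rw [← algebraMap_smul (MonoidAlgebra O G) c x, map_smul, map_smul, algebraMap_smul]
    · intro h x
      show v (Finsupp.linearCombination (MonoidAlgebra O G) id
          (MonoidAlgebra.of O ↥H h • x))
        = MonoidAlgebra.of O G (h : G) •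
            v (Finsupp.linearCombination (MonoidAlgebra O G) id x)
      rw [hbr, hφof, map_smul, map_smul]
    · intro m
      show v (Finsupp.linearCombination (MonoidAlgebra O G) id (s (u m))) = π ^ n • m
      rw [hs (u m), huv]
end

section
/- Let F : S → T be a full exact (triangulated) functor between triangulated categories such that FX ≠ 0 for every nonzero object X of S. Then F is faithful. -/
open CategoryTheory CategoryTheory.Limits

/-- A full exact (triangulated) functor between triangulated
(pretriangulated) categories which sends every nonzero object to a nonzero object
is faithful. -/
theorem full_exact_functor_reflecting_zero_is_faithful
    {S : Type*} [Category S] [Preadditive S] [HasZeroObject S] [HasShift S ℤ]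
    [∀ n : ℤ, (CategoryTheory.shiftFunctor S n).Additive] [Pretriangulated S]
    {T : Type*} [Category T] [Preadditive T] [HasZeroObject T] [HasShift T ℤ]
    [∀ n : ℤ, (CategoryTheory.shiftFunctor T n).Additive] [Pretriangulated T]
    (F : S ⥤ T) [F.Additive] [F.CommShift ℤ] [F.IsTriangulated] [F.Full]
    (hF : ∀ X : S, ¬ IsZero X → ¬ IsZero (F.obj X)) :
    F.Faithful := by
  have key : ∀ {X Y : S} (f : X ⟶ Y), F.map f = 0 → f = 0 := by
    intro X Y f hf
    obtain ⟨Z, g, h, hT⟩ := Pretriangulated.distinguished_cocone_triangle f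
    have hFT := F.map_distinguished _ hT
    -- a retraction of F.map g
    obtain ⟨b, hb⟩ := Pretriangulated.Triangle.yoneda_exact₂ _ hFT (𝟙 (F.obj Y))
      (by dsimp [Functor.mapTriangle]; exact (Category.comp_id (F.map f)).trans hf)
    obtain ⟨r, hr⟩ := F.map_surjective (X := Z) (Y := Y) b
    have he : F.map (g ≫ r) = 𝟙 (F.obj Y) := by
      rw [F.map_comp, hr]
      exact hb.symm
    -- cone of g ≫ r
    obtain ⟨C, g₂, h₂, hT₂⟩ := Pretriangulated.distinguished_cocone_triangle (g ≫ r)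
    have hFT₂ := F.map_distinguished _ hT₂
    have hzC : IsZero (F.obj C) := by
      have : IsIso ((F.mapTriangle.obj (Pretriangulated.Triangle.mk (g ≫ r) g₂ h₂)).mor₁) := by
        dsimp [Functor.mapTriangle]
        simp only [Pretriangulated.Triangle.mk_mor₁, he]
        have h1 : IsIso (𝟙 (F.obj Y)) := inferInstance; rw [← he] at h1; exact h1
      exact Pretriangulated.Triangle.isZero₃_of_isIso₁ _ hFT₂ this
    have hC : IsZero C := by
      by_contra hc
      exact hF C hc hzC
    have : IsIso (g ≫ r) :=
      (Pretriangulated.Triangle.isZero₃_iff_isIso₁ _ hT₂).1 hC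
    have hfg : f ≫ g = 0 := Pretriangulated.comp_distTriang_mor_zero₁₂ _ hT
    calc f = f ≫ (g ≫ r) ≫ inv (g ≫ r) := by rw [IsIso.hom_inv_id, Category.comp_id]
    _ = (f ≫ g) ≫ r ≫ inv (g ≫ r) := by simp only [Category.assoc]
    _ = 0 := by rw [hfg, zero_comp]
  exact ⟨fun {X Y f g} hfg => by
    have : F.map (f - g) = 0 := by simp [hfg]
    have := key _ this
    rwa [sub_eq_zero] at this⟩
end
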